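/- Optimality upper bound on the type-II error exponent (unbalanced sample sizes): Let X be a Polish space, let P ≠ Q be Borel probability measures on X with 0 < D(P‖Q) < ∞, let n = n_t, m = m_t be sequences of positive integers tending to infinity with n_t/m_t → ∞, and let 0 < α < 1. Let A'(n,m) ⊆ X^n × X^m be measurable acceptance regions that form an asymptotically level α two-sample test, i.e., for every Borel probability measure R, limsup_{t→∞} (R^{⊗n_t} ⊗ R^{⊗m_t})( complement of A'(n_t,m_t) ) ≤ α. Then the type-II error probabilities β'_{n,m} = (P^{⊗n} ⊗ Q^{⊗m})(A'(n,m)) satisfy liminf_{t→∞} −(1/m_t) · log β'_{n_t,m_t} ≤ D(P‖Q). -/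

import Mathlib

open MeasureTheory Filter Set
open scoped ENNReal NNReal

noncomputable section

/-- The empirical measure of the sample `x = (x 1, …, x n)`:  `(1/n) ∑ i, δ_{x i}`. -/
def empMeas {X : Type*} [MeasurableSpace X] {n : ℕ} (x : Fin n → X) : Measure X :=
  (n : ℝ≥0∞)⁻¹ • ∑ i, Measure.dirac (x i)

lemma empMeas_isProb {X : Type*} [MeasurableSpace X] {n : ℕ} (hn : n ≠ 0) (x : Fin n → X) :
    IsProbabilityMeasure (empMeas x) := by
  constructor
  simp only [empMeas, Measure.smul_apply, Measure.finsetSum_apply, measure_univ,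
    Finset.sum_const, Finset.card_univ, Fintype.card_fin, nsmul_eq_mul, mul_one, smul_eq_mul]
  exact ENNReal.inv_mul_cancel (by exact_mod_cast hn) (ENNReal.natCast_ne_top n)

/-- The empirical measure, as a probability measure (requires `n ≠ 0`). -/
def empProb {X : Type*} [MeasurableSpace X] {n : ℕ} (hn : n ≠ 0) (x : Fin n → X) :
    ProbabilityMeasure X := ⟨empMeas x, empMeas_isProb hn x⟩

open Classical in
/-- Kullback–Leibler divergence `D(R‖P) = ∫ log (dR/dP) dR` if `R ≪ P` (and the integral is
well defined), `+∞` otherwise. -/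
def KL {X : Type*} [MeasurableSpace X] (R P : Measure X) : ℝ≥0∞ :=
  if R ≪ P ∧ Integrable (llr R P) R then ENNReal.ofReal (∫ x, llr R P x ∂ R) else ⊤

/-- Extended-real logarithm of an extended-nonnegative real, with `elog 0 = ⊥`. -/
def elog (x : ℝ≥0∞) : EReal :=
  if x = 0 then ⊥ else if x = ⊤ then ⊤ else ((Real.log x.toReal : ℝ) : EReal)


section Aux

variable {X : Type*} [MeasurableSpace X]

lemma lintegral_pi_prod' {k : ℕ} (μ : Measure X) [SigmaFinite μ] (f : Fin k → X → ℝ≥0∞)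
    (hf : ∀ i, Measurable (f i)) :
    ∫⁻ y : Fin k → X, ∏ i, f i (y i) ∂(Measure.pi fun _ => μ) = ∏ i, ∫⁻ x, f i x ∂μ := by
  induction k with
  | zero => simp
  | succ n ih =>
    rw [← ((measurePreserving_piFinSuccAbove (fun _ : Fin (n+1) => μ) 0).symm).lintegral_comp_emb
      (MeasurableEquiv.measurableEmbedding _) (fun y => ∏ i, f i (y i))]
    simp_rw [MeasurableEquiv.piFinSuccAbove_symm_apply, Fin.insertNthEquiv,
      Fin.prod_univ_succ, Fin.insertNth_zero, Equiv.coe_fn_mk, Fin.cons_succ,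
      Fin.cons_zero, cast_eq]
    have h2 : Measurable fun z : Fin n → X => ∏ i : Fin n, f i.succ (z i) :=
      Finset.measurable_prod _ fun i _ => (hf i.succ).comp (measurable_pi_apply i)
    rw [lintegral_prod_mul (μ := μ) (f := f 0)
      (g := fun z : Fin n → X => ∏ i : Fin n, f i.succ (z i)) (hf 0).aemeasurable h2.aemeasurable,
      ih (fun i => f i.succ) (fun i => hf i.succ)]

lemma Integrable.pi_prod' {k : ℕ} (μ : Measure X) [IsProbabilityMeasure μ] {f : Fin k → X → ℝ}
    (hf : ∀ i, Integrable (f i) μ) :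
    Integrable (fun y : Fin k → X => ∏ i, f i (y i)) (Measure.pi fun _ => μ) := by
  induction k with
  | zero =>
    simp only [Finset.univ_eq_empty, Finset.prod_empty]
    exact integrable_const 1
  | succ n ih =>
    rw [← ((measurePreserving_piFinSuccAbove (fun _ : Fin (n+1) => μ) 0).symm).integrable_comp_emb
      (MeasurableEquiv.measurableEmbedding _)]
    simp_rw [Function.comp_def, MeasurableEquiv.piFinSuccAbove_symm_apply, Fin.insertNthEquiv,
      Fin.prod_univ_succ, Fin.insertNth_zero, Equiv.coe_fn_mk, Fin.cons_succ,
      Fin.cons_zero, cast_eq]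
    exact Integrable.mul_prod (hf 0) (ih fun i => hf i.succ)

lemma integral_pi_prod' {k : ℕ} (μ : Measure X) [SigmaFinite μ] (f : Fin k → X → ℝ) :
    ∫ y : Fin k → X, ∏ i, f i (y i) ∂(Measure.pi fun _ => μ) = ∏ i, ∫ x, f i x ∂μ := by
  induction k with
  | zero => simp [measureReal_def, Measure.pi_univ]
  | succ n ih =>
    rw [← ((measurePreserving_piFinSuccAbove (fun _ : Fin (n+1) => μ) 0).symm).integral_comp'
      (fun y => ∏ i, f i (y i))]
    simp_rw [MeasurableEquiv.piFinSuccAbove_symm_apply, Fin.insertNthEquiv,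
      Fin.prod_univ_succ, Fin.insertNth_zero, Equiv.coe_fn_mk, Fin.cons_succ,
      Fin.cons_zero, cast_eq]
    rw [integral_prod_mul (f 0) (fun z : Fin n → X => ∏ i : Fin n, f i.succ (z i)),
      ih (fun i => f i.succ)]

lemma integrable_of_bdd {μ : Measure X} [IsFiniteMeasure μ] {f : X → ℝ} {C : ℝ}
    (hm : Measurable f) (hb : ∀ x, |f x| ≤ C) : Integrable f μ :=
  Integrable.mono' (integrable_const C) hm.aestronglyMeasurable
    (Filter.Eventually.of_forall fun x => (Real.norm_eq_abs _ ▸ hb x))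

section prob
variable {k : ℕ} (μ : Measure X) [IsProbabilityMeasure μ]

lemma integral_pi_eval (i : Fin k) (f : X → ℝ) (hf : Integrable f μ) :
    ∫ y : Fin k → X, f (y i) ∂(Measure.pi fun _ => μ) = ∫ x, f x ∂μ := by
  classical
  have h := integral_pi_prod' μ (fun j => if j = i then f else fun _ => (1:ℝ))
  calc ∫ y : Fin k → X, f (y i) ∂(Measure.pi fun _ => μ)
      = ∫ y : Fin k → X, ∏ j, (if j = i then f else fun _ => (1:ℝ)) (y j)
        ∂(Measure.pi fun _ => μ) := by
        congr 1; funext y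
        rw [Finset.prod_eq_single i]
        · simp
        · intro j _ hj; simp [hj]
        · simp
    _ = ∏ j, ∫ x, (if j = i then f else fun _ => (1:ℝ)) x ∂μ := integral_pi_prod' μ _
    _ = ∫ x, f x ∂μ := by
        rw [Finset.prod_eq_single i]
        · simp
        · intro j _ hj; simp [hj]
        · simp

lemma integrable_pi_eval (i : Fin k) (f : X → ℝ) (hf : Integrable f μ) :
    Integrable (fun y : Fin k → X => f (y i)) (Measure.pi fun _ => μ) := by
  classical
  have h := Integrable.pi_prod' μ (f := fun j => if j = i then f else fun _ => (1:ℝ))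
    (fun j => by by_cases hji : j = i <;> simp [hji, hf])
  convert h using 2 with y
  rw [Finset.prod_eq_single i]
  · simp
  · intro j _ hj; simp [hj]
  · simp

lemma integral_pi_pair {i j : Fin k} (hij : i ≠ j) (f g : X → ℝ)
    (hf : Integrable f μ) (hg : Integrable g μ) :
    ∫ y : Fin k → X, f (y i) * g (y j) ∂(Measure.pi fun _ => μ)
      = (∫ x, f x ∂μ) * ∫ x, g x ∂μ := by
  classical
  set F : Fin k → X → ℝ := fun l => if l = i then f else if l = j then g else fun _ => (1:ℝ)
    with hF
  have key : ∀ y : Fin k → X, ∏ l, F l (y l) = f (y i) * g (y j) := by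
    intro y
    rw [← Finset.mul_prod_erase Finset.univ _ (Finset.mem_univ i)]
    rw [← Finset.mul_prod_erase ((Finset.univ).erase i) (fun l => F l (y l))
      (Finset.mem_erase.2 ⟨Ne.symm hij, Finset.mem_univ j⟩)]
    have : ∏ l ∈ ((Finset.univ).erase i).erase j, F l (y l) = 1 := by
      apply Finset.prod_eq_one
      intro l hl
      have h1 := (Finset.mem_erase.1 hl).1
      have h2 := (Finset.mem_erase.1 (Finset.mem_erase.1 hl).2).1
      simp [hF, h1, h2]
    rw [this]
    simp [hF, Ne.symm hij, hij]
  calc ∫ y : Fin k → X, f (y i) * g (y j) ∂(Measure.pi fun _ => μ)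
      = ∫ y : Fin k → X, ∏ l, F l (y l) ∂(Measure.pi fun _ => μ) := by
        congr 1; funext y; rw [key y]
    _ = ∏ l, ∫ x, F l x ∂μ := integral_pi_prod' μ _
    _ = (∫ x, f x ∂μ) * ∫ x, g x ∂μ := by
        rw [← Finset.mul_prod_erase Finset.univ _ (Finset.mem_univ i),
          ← Finset.mul_prod_erase ((Finset.univ).erase i) (fun l => ∫ x, F l x ∂μ)
            (Finset.mem_erase.2 ⟨Ne.symm hij, Finset.mem_univ j⟩)]
        have : ∏ l ∈ ((Finset.univ).erase i).erase j, ∫ x, F l x ∂μ = 1 := by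
          apply Finset.prod_eq_one
          intro l hl
          have h1 := (Finset.mem_erase.1 hl).1
          have h2 := (Finset.mem_erase.1 (Finset.mem_erase.1 hl).2).1
          simp [hF, h1, h2]
        rw [this]
        simp [hF, Ne.symm hij, hij]

end prob


lemma wlln (μ : Measure X) [IsProbabilityMeasure μ] {f : X → ℝ} (hfm : Measurable f)
    (hf : Integrable f μ) {ε δ : ℝ} (hε : 0 < ε) (hδ : 0 < δ) :
    ∀ᶠ k : ℕ in atTop, (Measure.pi fun _ : Fin k => μ)
      {y : Fin k → X | (k : ℝ) * ((∫ x, f x ∂μ) + ε) < ∑ i, f (y i)} ≤ ENNReal.ofReal δ := by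
  classical
  set η : ℝ := min (ε/4) (ε*δ/8) with hη_def
  have hη : 0 < η := lt_min (by positivity) (by positivity)
  have hη1 : η ≤ ε/4 := min_le_left _ _
  have hη2 : η ≤ ε*δ/8 := min_le_right _ _
  obtain ⟨g, hgs, hgmem⟩ := (memLp_one_iff_integrable.2 hf).exists_simpleFunc_eLpNorm_sub_lt
    ENNReal.one_ne_top (ne_of_gt (ENNReal.ofReal_pos.2 hη))
  have hgint : Integrable (⇑g) μ := memLp_one_iff_integrable.1 hgmem
  have hsubint : Integrable (f - ⇑g) μ := hf.sub hgint
  set h : X → ℝ := fun x => |f x - g x| with hh_def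
  have hhint : Integrable h μ := hsubint.abs
  have hhm : Measurable h := (hfm.sub g.measurable).abs
  set Eh : ℝ := ∫ x, h x ∂μ with hEh_def
  have hEh_nonneg : 0 ≤ Eh := integral_nonneg fun x => abs_nonneg _
  have hEh : Eh < η := by
    have h1 : ENNReal.ofReal (∫ x, ‖(f - ⇑g) x‖ ∂μ) = ∫⁻ x, ‖(f - ⇑g) x‖ₑ ∂μ :=
      ofReal_integral_norm_eq_lintegral_enorm hsubint
    have h2 : eLpNorm (f - ⇑g) 1 μ = ∫⁻ x, ‖(f - ⇑g) x‖ₑ ∂μ :=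
      eLpNorm_one_eq_lintegral_enorm
    have h3 : ENNReal.ofReal (∫ x, ‖(f - ⇑g) x‖ ∂μ) < ENNReal.ofReal η := by
      rw [h1, ← h2]; exact hgs
    have h4 : (∫ x, ‖(f - ⇑g) x‖ ∂μ) = Eh := by
      simp only [hEh_def, hh_def, Pi.sub_apply, Real.norm_eq_abs]
    rw [h4] at h3
    exact (ENNReal.ofReal_lt_ofReal_iff hη).1 h3
  obtain ⟨C, hC⟩ := g.exists_forall_norm_le
  set c : ℝ := ∫ x, f x ∂μ with hc_def
  set cg : ℝ := ∫ x, g x ∂μ with hcg_def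
  have hccg : cg ≤ c + η := by
    have habs : |c - cg| ≤ Eh := by
      rw [hc_def, hcg_def, ← integral_sub hf hgint]
      calc |∫ x, (f - ⇑g) x ∂μ| ≤ ∫ x, |(f - ⇑g) x| ∂μ := by
            simpa only [Real.norm_eq_abs] using norm_integral_le_integral_norm (μ := μ) (f - ⇑g)
        _ = Eh := by simp only [hEh_def, hh_def, Pi.sub_apply]
    have := (abs_le.1 habs).1
    linarith [hEh]
  set gh : X → ℝ := fun x => g x - cg with hgh_def
  have hghm : Measurable gh := g.measurable.sub measurable_const
  set C' : ℝ := |C| + |cg| with hC'_def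
  have hC'0 : 0 ≤ C' := by positivity
  have hgh_bdd : ∀ x, |gh x| ≤ C' := by
    intro x
    calc |gh x| ≤ |g x| + |cg| := abs_sub _ _
      _ ≤ |C| + |cg| := by
          have := hC x; rw [Real.norm_eq_abs] at this
          have : |g x| ≤ |C| := this.trans (le_abs_self C)
          linarith
  have hghint : Integrable gh μ := integrable_of_bdd hghm hgh_bdd
  have hgh0 : ∫ x, gh x ∂μ = 0 := by
    simp only [hgh_def]
    rw [integral_sub hgint (integrable_const _), integral_const]
    simp [hcg_def]
  have hghsq_bdd : ∀ x, |gh x * gh x| ≤ C' * C' := fun x => by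
    rw [abs_mul]; exact mul_le_mul (hgh_bdd x) (hgh_bdd x) (abs_nonneg _) hC'0
  have hghsqint : Integrable (fun x => gh x * gh x) μ :=
    integrable_of_bdd (hghm.mul hghm) hghsq_bdd
  set Vg : ℝ := ∫ x, gh x * gh x ∂μ with hVg_def
  have hVg_bdd : Vg ≤ C' * C' := by
    have h1 : Vg ≤ ∫ _x, C' * C' ∂μ :=
      integral_mono hghsqint (integrable_const _)
        (fun x => (le_abs_self _).trans (hghsq_bdd x))
    simpa using h1
  have hVg_nonneg : 0 ≤ Vg := integral_nonneg fun x => mul_self_nonneg _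
  -- main estimate for fixed k
  have key : ∀ k : ℕ, 0 < k → 8 * (C' * C') ≤ (k : ℝ) * ε ^ 2 * δ →
      (Measure.pi fun _ : Fin k => μ)
        {y : Fin k → X | (k : ℝ) * (c + ε) < ∑ i, f (y i)} ≤ ENNReal.ofReal δ := by
    intro k hk hkC
    have hk0 : (0:ℝ) < k := by exact_mod_cast hk
    set ν : Measure (Fin k → X) := Measure.pi fun _ => μ with hν_def
    haveI : IsProbabilityMeasure ν := by rw [hν_def]; infer_instance
    set E1 : Set (Fin k → X) := {y | (k : ℝ) * ε / 2 ≤ ∑ i, gh (y i)} with hE1_def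
    set E2 : Set (Fin k → X) := {y | (k : ℝ) * ε / 4 ≤ ∑ i, h (y i)} with hE2_def
    have hsub : {y : Fin k → X | (k : ℝ) * (c + ε) < ∑ i, f (y i)} ⊆ E1 ∪ E2 := by
      intro y hy
      by_contra hno
      rw [mem_union] at hno
      push_neg at hno
      obtain ⟨h1, h2⟩ := hno
      simp only [hE1_def, hE2_def, mem_setOf_eq, not_le] at h1 h2
      simp only [mem_setOf_eq] at hy
      have hfg : ∑ i, f (y i) ≤ ∑ i, g (y i) + ∑ i, h (y i) := by
        rw [← Finset.sum_add_distrib]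
        refine Finset.sum_le_sum fun i _ => ?_
        have : f (y i) - g (y i) ≤ |f (y i) - g (y i)| := le_abs_self _
        simp only [hh_def]; linarith
      have hsum_g : ∑ i, g (y i) = ∑ i, gh (y i) + (k : ℝ) * cg := by
        simp only [hgh_def]
        rw [Finset.sum_sub_distrib, Finset.sum_const, Finset.card_univ, Fintype.card_fin]
        push_cast; ring
      have hcg_bound : (k : ℝ) * cg ≤ (k : ℝ) * (c + ε/4) := by
        apply mul_le_mul_of_nonneg_left _ (le_of_lt hk0)
        linarith
      nlinarith
    have hE2_bound : ν E2 ≤ ENNReal.ofReal (δ/2) := by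
      have hint : Integrable (fun y : Fin k → X => ∑ i, h (y i)) ν :=
        integrable_finset_sum _ fun i _ => integrable_pi_eval μ i h hhint
      have hval : ∫ y, (∑ i, h (y i)) ∂ν = (k : ℝ) * Eh := by
        rw [integral_finset_sum _ fun i _ => integrable_pi_eval μ i h hhint]
        simp only [integral_pi_eval μ _ h hhint]
        rw [Finset.sum_const, Finset.card_univ, Fintype.card_fin]
        push_cast; ring
      have markov := mul_meas_ge_le_integral_of_nonneg (μ := ν)
        (ae_of_all _ fun y => Finset.sum_nonneg fun i _ => abs_nonneg _) hint ((k:ℝ)*ε/4)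
      rw [hval] at markov
      have hEh_bound : (k : ℝ) * Eh ≤ ((k:ℝ)*ε/4) * (δ/2) := by nlinarith
      have hT : (ν E2).toReal ≤ δ/2 := by
        have ha : (0:ℝ) < (k:ℝ)*ε/4 := by positivity
        have := markov.trans hEh_bound
        exact le_of_mul_le_mul_left this ha
      rw [← ENNReal.ofReal_toReal (measure_ne_top ν E2)]
      exact ENNReal.ofReal_le_ofReal hT
    have hE1_bound : ν E1 ≤ ENNReal.ofReal (δ/2) := by
      set S : (Fin k → X) → ℝ := fun y => ∑ i, gh (y i) with hS_def
      have hSm : Measurable S := Finset.measurable_sum _ fun i _ =>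
        hghm.comp (measurable_pi_apply i)
      have hS_bdd : ∀ y, |S y| ≤ (k:ℝ) * C' := by
        intro y
        calc |S y| ≤ ∑ i, |gh (y i)| := Finset.abs_sum_le_sum_abs _ _
          _ ≤ ∑ _i : Fin k, C' := Finset.sum_le_sum fun i _ => hgh_bdd _
          _ = (k:ℝ) * C' := by
              rw [Finset.sum_const, Finset.card_univ, Fintype.card_fin]; push_cast; ring
      set F : (Fin k → X) → ℝ := fun y => S y * S y with hF_def
      have hFm : Measurable F := hSm.mul hSm
      have hF_bdd : ∀ y, |F y| ≤ ((k:ℝ)*C') * ((k:ℝ)*C') := fun y => by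
        rw [hF_def, abs_mul]
        exact mul_le_mul (hS_bdd y) (hS_bdd y) (abs_nonneg _) (by positivity)
      have hFint : Integrable F ν := integrable_of_bdd hFm hF_bdd
      have hterm_int : ∀ i j : Fin k, Integrable (fun y : Fin k → X => gh (y i) * gh (y j)) ν := by
        intro i j
        refine integrable_of_bdd (C := C' * C')
          ((hghm.comp (measurable_pi_apply i)).mul (hghm.comp (measurable_pi_apply j))) fun y => ?_
        rw [abs_mul]
        exact mul_le_mul (hgh_bdd _) (hgh_bdd _) (abs_nonneg _) hC'0
      have hFval : ∫ y, F y ∂ν = (k : ℝ) * Vg := by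
        have hexp : ∀ y, F y = ∑ i, ∑ j, gh (y i) * gh (y j) := by
          intro y; simp only [hF_def, hS_def]; rw [Finset.sum_mul_sum]
        calc ∫ y, F y ∂ν = ∫ y, ∑ i, ∑ j, gh (y i) * gh (y j) ∂ν := by
              congr 1; funext y; exact hexp y
          _ = ∑ i, ∑ j, ∫ y, gh (y i) * gh (y j) ∂ν := by
              rw [integral_finset_sum _ fun i _ => integrable_finset_sum _ fun j _ => hterm_int i j]
              exact Finset.sum_congr rfl fun i _ =>
                integral_finset_sum _ fun j _ => hterm_int i j
          _ = ∑ i : Fin k, ∑ j : Fin k, (if i = j then Vg else 0) := by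
              refine Finset.sum_congr rfl fun i _ => Finset.sum_congr rfl fun j _ => ?_
              by_cases hij : i = j
              · subst hij
                simp only [if_true]
                exact integral_pi_eval μ i (fun x => gh x * gh x) hghsqint
              · rw [if_neg hij, integral_pi_pair μ hij gh gh hghint hghint, hgh0, mul_zero]
          _ = (k : ℝ) * Vg := by
              simp only [Finset.sum_ite_eq, Finset.mem_univ, if_true]
              rw [Finset.sum_const, Finset.card_univ, Fintype.card_fin]; push_cast; ring
      have hsubE1 : E1 ⊆ {y | ((k:ℝ)*ε/2) * ((k:ℝ)*ε/2) ≤ F y} := by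
        intro y hy
        simp only [hE1_def, mem_setOf_eq] at hy
        simp only [mem_setOf_eq, hF_def]
        exact mul_le_mul hy hy (by positivity) ((by positivity : (0:ℝ) ≤ (k:ℝ)*ε/2).trans hy)
      have markov := mul_meas_ge_le_integral_of_nonneg (μ := ν)
        (ae_of_all _ fun y => mul_self_nonneg (S y)) hFint (((k:ℝ)*ε/2) * ((k:ℝ)*ε/2))
      rw [hFval] at markov
      have hbound : (k : ℝ) * Vg ≤ (((k:ℝ)*ε/2) * ((k:ℝ)*ε/2)) * (δ/2) := by nlinarith
      have hT : (ν {y | ((k:ℝ)*ε/2) * ((k:ℝ)*ε/2) ≤ F y}).toReal ≤ δ/2 := by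
        have ha : (0:ℝ) < ((k:ℝ)*ε/2) * ((k:ℝ)*ε/2) := by positivity
        exact le_of_mul_le_mul_left (markov.trans hbound) ha
      calc ν E1 ≤ ν {y | ((k:ℝ)*ε/2) * ((k:ℝ)*ε/2) ≤ F y} := measure_mono hsubE1
        _ ≤ ENNReal.ofReal (δ/2) := by
            rw [← ENNReal.ofReal_toReal (measure_ne_top ν _)]
            exact ENNReal.ofReal_le_ofReal hT
    calc (Measure.pi fun _ : Fin k => μ) {y : Fin k → X | (k : ℝ) * (c + ε) < ∑ i, f (y i)}
        ≤ ν (E1 ∪ E2) := measure_mono hsub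
      _ ≤ ν E1 + ν E2 := measure_union_le _ _
      _ ≤ ENNReal.ofReal (δ/2) + ENNReal.ofReal (δ/2) := add_le_add hE1_bound hE2_bound
      _ = ENNReal.ofReal δ := by
          rw [← ENNReal.ofReal_add (by positivity) (by positivity)]; norm_num
  have hev : ∀ᶠ k : ℕ in atTop, 8 * (C' * C') ≤ (k : ℝ) * ε ^ 2 * δ := by
    have := tendsto_natCast_atTop_atTop (R := ℝ)
    filter_upwards [this.eventually_ge_atTop (8 * (C' * C') / (ε^2 * δ))] with k hk
    rw [div_le_iff₀ (by positivity)] at hk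
    calc 8 * (C' * C') ≤ (k:ℝ) * (ε^2 * δ) := hk
      _ = (k:ℝ) * ε^2 * δ := by ring
  filter_upwards [eventually_gt_atTop 0, hev] with k hk0 hk
  exact key k hk0 hk


lemma pi_withDensity_rnDeriv (P Q : Measure X) [IsProbabilityMeasure P] [IsProbabilityMeasure Q]
    (hac : P ≪ Q) (k : ℕ) :
    (Measure.pi fun _ : Fin k => P)
      = (Measure.pi fun _ : Fin k => Q).withDensity (fun y => ∏ i, P.rnDeriv Q (y i)) := by
  refine Measure.pi_eq fun s hs => ?_
  rw [withDensity_apply _ (MeasurableSet.univ_pi hs)]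
  have hind : (univ.pi s).indicator (fun y : Fin k → X => ∏ i, P.rnDeriv Q (y i))
      = fun y : Fin k → X => ∏ i, (s i).indicator (P.rnDeriv Q) (y i) := by
    funext y
    by_cases hy : y ∈ univ.pi s
    · rw [indicator_of_mem hy]
      refine Finset.prod_congr rfl fun i _ => ?_
      rw [indicator_of_mem (hy i (mem_univ i))]
    · rw [indicator_of_notMem hy]
      rw [mem_univ_pi] at hy
      push_neg at hy
      obtain ⟨i, hi⟩ := hy
      symm
      apply Finset.prod_eq_zero (Finset.mem_univ i)
      rw [indicator_of_notMem hi]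
    
  rw [← lintegral_indicator (MeasurableSet.univ_pi hs)
    (fun y : Fin k → X => ∏ i, P.rnDeriv Q (y i)), hind,
    lintegral_pi_prod' Q _ (fun i => (Measure.measurable_rnDeriv P Q).indicator (hs i))]
  refine Finset.prod_congr rfl fun i _ => ?_
  rw [lintegral_indicator (hs i), Measure.setLIntegral_rnDeriv hac]

lemma change_of_measure (P Q : Measure X) [IsProbabilityMeasure P] [IsProbabilityMeasure Q]
    (hac : P ≪ Q) {n k : ℕ} (c : ℝ) {S : Set ((Fin n → X) × (Fin k → X))}
    (hS : MeasurableSet S) {B : Set (Fin k → X)} (hSB : S ⊆ univ ×ˢ B)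
    (hB : B ⊆ {y : Fin k → X | ∏ i, P.rnDeriv Q (y i) ≤ ENNReal.ofReal (Real.exp c)}) :
    ((Measure.pi fun _ : Fin n => P).prod (Measure.pi fun _ : Fin k => P)) S
      ≤ ENNReal.ofReal (Real.exp c)
        * ((Measure.pi fun _ : Fin n => P).prod (Measure.pi fun _ : Fin k => Q)) S := by
  have hslice : ∀ x : Fin n → X,
      (Measure.pi fun _ : Fin k => P) (Prod.mk x ⁻¹' S)
        ≤ ENNReal.ofReal (Real.exp c) * (Measure.pi fun _ : Fin k => Q) (Prod.mk x ⁻¹' S) := by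
    intro x
    have hEm : MeasurableSet (Prod.mk x ⁻¹' S) := measurable_prodMk_left hS
    have hEB : Prod.mk x ⁻¹' S ⊆ B := by
      intro e he
      have := hSB he
      exact this.2
    rw [pi_withDensity_rnDeriv P Q hac k, withDensity_apply _ hEm]
    calc ∫⁻ y in Prod.mk x ⁻¹' S, ∏ i, P.rnDeriv Q (y i) ∂(Measure.pi fun _ : Fin k => Q)
        ≤ ∫⁻ _y in Prod.mk x ⁻¹' S, ENNReal.ofReal (Real.exp c)
            ∂(Measure.pi fun _ : Fin k => Q) := by
          refine setLIntegral_mono (measurable_const) fun y hy => ?_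
          exact hB (hEB hy)
      _ = ENNReal.ofReal (Real.exp c) * (Measure.pi fun _ : Fin k => Q) (Prod.mk x ⁻¹' S) := by
          rw [setLIntegral_const]
  rw [Measure.prod_apply hS, Measure.prod_apply hS]
  calc ∫⁻ x, (Measure.pi fun _ : Fin k => P) (Prod.mk x ⁻¹' S) ∂(Measure.pi fun _ : Fin n => P)
      ≤ ∫⁻ x, ENNReal.ofReal (Real.exp c) * (Measure.pi fun _ : Fin k => Q) (Prod.mk x ⁻¹' S)
          ∂(Measure.pi fun _ : Fin n => P) := lintegral_mono hslice
    _ = ENNReal.ofReal (Real.exp c) * ∫⁻ x, (Measure.pi fun _ : Fin k => Q) (Prod.mk x ⁻¹' S)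
          ∂(Measure.pi fun _ : Fin n => P) :=
        lintegral_const_mul _ (measurable_measure_prodMk_left hS)

end Aux

/-- **Optimality upper bound on the type-II error exponent (unbalanced sample sizes).** -/
theorem level_alpha_test_exponent_upper_unbalanced
    {X : Type*} [TopologicalSpace X] [PolishSpace X] [MeasurableSpace X] [BorelSpace X]
    (P Q : Measure X) [IsProbabilityMeasure P] [IsProbabilityMeasure Q] (hPQ : P ≠ Q)
    (hKL0 : 0 < KL P Q) (hKLtop : KL P Q < ⊤)
    (n m : ℕ → ℕ) (hn : ∀ t, 0 < n t) (hm : ∀ t, 0 < m t)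
    (hn' : Tendsto n atTop atTop) (hm' : Tendsto m atTop atTop)
    (hnm : Tendsto (fun t => (n t : ℝ) / (m t : ℝ)) atTop atTop)
    (α : ℝ) (hα0 : 0 < α) (hα1 : α < 1)
    (A : ∀ t, Set ((Fin (n t) → X) × (Fin (m t) → X)))
    (hA_meas : ∀ t, MeasurableSet (A t))
    -- the acceptance regions form an asymptotically level-α test:
    (hA_level : ∀ (R : Measure X), IsProbabilityMeasure R →
      Filter.limsup (fun t =>
        ((Measure.pi fun _ : Fin (n t) => R).prod (Measure.pi fun _ : Fin (m t) => R)) ((A t)ᶜ))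
        atTop ≤ ENNReal.ofReal α) :
    Filter.liminf (fun t =>
        ((-(1 / (m t : ℝ)) : ℝ) : EReal) *
          elog (((Measure.pi fun _ : Fin (n t) => P).prod
            (Measure.pi fun _ : Fin (m t) => Q)) (A t))) atTop
      ≤ ((KL P Q : ℝ≥0∞) : EReal) := by
  classical
  by_cases hcond : P ≪ Q ∧ Integrable (llr P Q) P
  swap
  · rw [KL, if_neg hcond] at hKLtop
    exact absurd hKLtop (lt_irrefl ⊤)
  obtain ⟨hac, hint⟩ := hcond
  set D : ℝ := ∫ x, llr P Q x ∂P with hD_def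
  have hKL_eq : KL P Q = ENNReal.ofReal D := by rw [KL, if_pos ⟨hac, hint⟩]
  have hD_pos : 0 < D := by
    rw [hKL_eq] at hKL0
    exact ENNReal.ofReal_pos.1 hKL0
  have htarget : ((KL P Q : ℝ≥0∞) : EReal) = ((D : ℝ) : EReal) := by
    rw [hKL_eq, EReal.coe_ennreal_ofReal, max_eq_left hD_pos.le]
  rw [htarget]
  -- main ε-step
  have main : ∀ ε : ℝ, 0 < ε →
      Filter.liminf (fun t =>
        ((-(1 / (m t : ℝ)) : ℝ) : EReal) *
          elog (((Measure.pi fun _ : Fin (n t) => P).prod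
            (Measure.pi fun _ : Fin (m t) => Q)) (A t))) atTop ≤ ((D + ε : ℝ) : EReal) := by
    intro ε hε
    set δ : ℝ := (1 - α) / 4 with hδ_def
    have hδ : 0 < δ := by rw [hδ_def]; linarith
    set ε2 : ℝ := ε / 2 with hε2_def
    have hε2 : 0 < ε2 := by positivity
    -- the good sets
    set B : ∀ k : ℕ, Set (Fin k → X) := fun k =>
      {y : Fin k → X | ∑ i, llr P Q (y i) ≤ (k : ℝ) * (D + ε2)}
        ∩ {y : Fin k → X | ∀ i, P.rnDeriv Q (y i) ≠ ∞} with hB_def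
    have hB_meas : ∀ k, MeasurableSet (B k) := by
      intro k
      apply MeasurableSet.inter
      · exact measurableSet_le (Finset.measurable_sum _ fun i _ =>
          (measurable_llr P Q).comp (measurable_pi_apply i)) measurable_const
      · rw [show {y : Fin k → X | ∀ i, P.rnDeriv Q (y i) ≠ ∞}
            = ⋂ i, (fun y : Fin k → X => y i) ⁻¹' {x | P.rnDeriv Q x ≠ ∞} by
          ext y; simp]
        exact MeasurableSet.iInter fun i =>
          (measurable_pi_apply i) ((Measure.measurable_rnDeriv P Q) (measurableSet_singleton ⊤)).compl
    -- B is contained in the density-bounded set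
    have hB_sub : ∀ k : ℕ, B k ⊆ {y : Fin k → X |
        ∏ i, P.rnDeriv Q (y i) ≤ ENNReal.ofReal (Real.exp ((k : ℝ) * (D + ε2)))} := by
      intro k y hy
      obtain ⟨hy1, hy2⟩ := hy
      simp only [mem_setOf_eq] at hy1 hy2 ⊢
      by_cases h0 : ∃ i, P.rnDeriv Q (y i) = 0
      · obtain ⟨i, hi⟩ := h0
        rw [Finset.prod_eq_zero (Finset.mem_univ i) hi]
        exact zero_le
      · push_neg at h0
        have hne : ∏ i, P.rnDeriv Q (y i) ≠ ∞ :=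
          (ENNReal.prod_lt_top fun i _ => (hy2 i).lt_top).ne
        have htr : (∏ i, P.rnDeriv Q (y i)).toReal = ∏ i, (P.rnDeriv Q (y i)).toReal :=
          ENNReal.toReal_prod _ _
        have hprod_exp : ∏ i, (P.rnDeriv Q (y i)).toReal = Real.exp (∑ i, llr P Q (y i)) := by
          rw [Real.exp_sum]
          refine Finset.prod_congr rfl fun i _ => ?_
          rw [llr, Real.exp_log (ENNReal.toReal_pos (h0 i) (hy2 i))]
        rw [← ENNReal.ofReal_toReal hne, htr, hprod_exp]
        exact ENNReal.ofReal_le_ofReal (Real.exp_le_exp.2 hy1)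
    -- P^k((B k)ᶜ) small eventually
    have hBc : ∀ᶠ k : ℕ in atTop,
        (Measure.pi fun _ : Fin k => P) ((B k)ᶜ) ≤ ENNReal.ofReal δ := by
      have hwlln := wlln P (measurable_llr P Q) hint hε2 hδ
      filter_upwards [hwlln] with k hk
      have hfin0 : (Measure.pi fun _ : Fin k => P)
          {y : Fin k → X | ∀ i, P.rnDeriv Q (y i) ≠ ∞}ᶜ = 0 := by
        have hnull : P {x | P.rnDeriv Q x = ∞} = 0 := by
          have h1 : ∀ᵐ x ∂Q, P.rnDeriv Q x < ∞ := Measure.rnDeriv_lt_top P Q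
          have h2 : ∀ᵐ x ∂P, P.rnDeriv Q x < ∞ := hac.ae_le h1
          rw [ae_iff] at h2
          simpa only [not_lt, top_le_iff] using h2
        have hsub : {y : Fin k → X | ∀ i, P.rnDeriv Q (y i) ≠ ∞}ᶜ
            ⊆ ⋃ i, (fun y : Fin k → X => y i) ⁻¹' {x | P.rnDeriv Q x = ∞} := by
          intro y hy
          simp only [mem_compl_iff, mem_setOf_eq, not_forall, not_not] at hy
          obtain ⟨i, hi⟩ := hy
          exact mem_iUnion.2 ⟨i, hi⟩
        refine measure_mono_null hsub (measure_iUnion_null fun i => ?_)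
        exact Measure.pi_eval_preimage_null _ hnull
      calc (Measure.pi fun _ : Fin k => P) ((B k)ᶜ)
          ≤ (Measure.pi fun _ : Fin k => P)
              ({y : Fin k → X | ∑ i, llr P Q (y i) ≤ (k : ℝ) * (D + ε2)}ᶜ)
            + (Measure.pi fun _ : Fin k => P)
              ({y : Fin k → X | ∀ i, P.rnDeriv Q (y i) ≠ ∞}ᶜ) := by
            rw [hB_def, compl_inter]  -- Set.compl_inter
            exact measure_union_le _ _
        _ ≤ ENNReal.ofReal δ + 0 := by
            refine add_le_add ?_ (le_of_eq hfin0)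
            refine le_trans (le_of_eq ?_) hk
            congr 1
            ext y
            simp [not_le, hD_def]
        _ = ENNReal.ofReal δ := by rw [add_zero]
    -- level condition gives acceptance lower bound eventually
    have hev1 : ∀ᶠ t in atTop,
        ((Measure.pi fun _ : Fin (n t) => P).prod (Measure.pi fun _ : Fin (m t) => P)) ((A t)ᶜ)
          < ENNReal.ofReal (α + δ) := by
      refine eventually_lt_of_limsup_lt (lt_of_le_of_lt (hA_level P inferInstance) ?_)
      rw [ENNReal.ofReal_lt_ofReal_iff (by linarith)]
      linarith
    have hev2 : ∀ᶠ t in atTop,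
        (Measure.pi fun _ : Fin (m t) => P) ((B (m t))ᶜ) ≤ ENNReal.ofReal δ :=
      hm'.eventually hBc
    have hev3 : ∀ᶠ t in atTop, |Real.log (2 * δ)| / ε2 ≤ (m t : ℝ) := by
      have := hm'.eventually (eventually_ge_atTop ⌈|Real.log (2 * δ)| / ε2⌉₊)
      filter_upwards [this] with t ht
      calc |Real.log (2 * δ)| / ε2 ≤ ⌈|Real.log (2 * δ)| / ε2⌉₊ := Nat.le_ceil _
        _ ≤ (m t : ℝ) := by exact_mod_cast ht
    have hfinal : ∀ᶠ t in atTop,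
        ((-(1 / (m t : ℝ)) : ℝ) : EReal) *
          elog (((Measure.pi fun _ : Fin (n t) => P).prod
            (Measure.pi fun _ : Fin (m t) => Q)) (A t)) ≤ ((D + ε : ℝ) : EReal) := by
      filter_upwards [hev1, hev2, hev3] with t h1 h2 h3
      set mt : ℕ := m t
      set Pn : Measure (Fin (n t) → X) := Measure.pi fun _ => P with hPn_def
      set Pm : Measure (Fin mt → X) := Measure.pi fun _ => P with hPm_def
      set Qm : Measure (Fin mt → X) := Measure.pi fun _ => Q with hQm_def
      have hmt : (0:ℝ) < mt := by exact_mod_cast hm t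
      set c : ℝ := (mt : ℝ) * (D + ε2) with hc_def
      set S : Set ((Fin (n t) → X) × (Fin mt → X)) := A t ∩ (univ ×ˢ B mt) with hS_def
      have hS_meas : MeasurableSet S :=
        (hA_meas t).inter (MeasurableSet.univ.prod (hB_meas mt))
      -- lower bound on (Pn ⊗ Pm) S
      have hPP_S : ENNReal.ofReal (2 * δ) ≤ (Pn.prod Pm) S := by
        have hcompl : (Pn.prod Pm) Sᶜ ≤ ENNReal.ofReal (α + δ) + ENNReal.ofReal δ := by
          have : Sᶜ = (A t)ᶜ ∪ (univ ×ˢ B mt)ᶜ := by rw [hS_def, compl_inter]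
          rw [this]
          refine le_trans (measure_union_le _ _) (add_le_add (le_of_lt h1) ?_)
          have huniv : (univ ×ˢ B mt : Set ((Fin (n t) → X) × (Fin mt → X)))ᶜ
              = univ ×ˢ (B mt)ᶜ := by
            ext ⟨x, y⟩; simp
          rw [huniv, Measure.prod_prod, measure_univ, one_mul]
          exact h2
        have h1le : (1 : ℝ≥0∞) ≤ (Pn.prod Pm) S + ((Pn.prod Pm) Sᶜ) := by
          rw [← measure_univ (μ := Pn.prod Pm)]
          rw [← Set.union_compl_self S]
          exact measure_union_le _ _
        have : (1 : ℝ≥0∞) - (ENNReal.ofReal (α + δ) + ENNReal.ofReal δ) ≤ (Pn.prod Pm) S := by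
          rw [tsub_le_iff_right]
          exact h1le.trans (add_le_add le_rfl hcompl)
        refine le_trans (le_of_eq ?_) this
        rw [← ENNReal.ofReal_add (by linarith) hδ.le, ← ENNReal.ofReal_one,
          ← ENNReal.ofReal_sub _ (by linarith)]
        congr 1
        rw [hδ_def]; ring
      -- change of measure
      have hCM := change_of_measure P Q hac c hS_meas
        (inter_subset_right) (hB_sub mt)
      have hQ_S : ENNReal.ofReal (2 * δ * Real.exp (-c)) ≤ (Pn.prod Qm) S := by
        have step : ENNReal.ofReal (Real.exp (-c)) * (Pn.prod Pm) S ≤ (Pn.prod Qm) S := by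
          have := mul_le_mul_right hCM (ENNReal.ofReal (Real.exp (-c)))
          rw [← mul_assoc, ← ENNReal.ofReal_mul (Real.exp_pos _).le, ← Real.exp_add,
            neg_add_cancel, Real.exp_zero, ENNReal.ofReal_one, one_mul] at this
          exact this
        calc ENNReal.ofReal (2 * δ * Real.exp (-c))
            = ENNReal.ofReal (Real.exp (-c)) * ENNReal.ofReal (2 * δ) := by
              rw [← ENNReal.ofReal_mul (Real.exp_pos _).le]; ring_nf
          _ ≤ ENNReal.ofReal (Real.exp (-c)) * (Pn.prod Pm) S := mul_le_mul_right hPP_S _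
          _ ≤ (Pn.prod Qm) S := step
      have hβ_lb : ENNReal.ofReal (2 * δ * Real.exp (-c)) ≤ (Pn.prod Qm) (A t) :=
        hQ_S.trans (measure_mono inter_subset_left)
      -- numeric conclusion
      set β : ℝ≥0∞ := (Pn.prod Qm) (A t) with hβ_def
      have hβ_ne_top : β ≠ ⊤ := measure_ne_top _ _
      have hx_pos : 0 < 2 * δ * Real.exp (-c) := by positivity
      have hβ_ne_zero : β ≠ 0 := by
        intro h0
        rw [h0] at hβ_lb
        rw [le_zero_iff, ENNReal.ofReal_eq_zero] at hβ_lb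
        linarith
      have helog : elog β = ((Real.log β.toReal : ℝ) : EReal) := by
        rw [elog, if_neg hβ_ne_zero, if_neg hβ_ne_top]
      rw [helog, ← EReal.coe_mul, EReal.coe_le_coe_iff]
      -- real inequality
      have hβtoReal : 2 * δ * Real.exp (-c) ≤ β.toReal := by
        have := ENNReal.toReal_mono hβ_ne_top hβ_lb
        rwa [ENNReal.toReal_ofReal hx_pos.le] at this
      have hlog : Real.log (2 * δ) - c ≤ Real.log β.toReal := by
        have h2 : Real.log (2 * δ * Real.exp (-c)) ≤ Real.log β.toReal :=
          Real.log_le_log hx_pos hβtoReal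
        rwa [Real.log_mul (by linarith) (Real.exp_ne_zero _), Real.log_exp] at h2
      have hmt' : (0:ℝ) < 1 / (mt : ℝ) := by positivity
      have key : -(1 / (mt:ℝ)) * Real.log β.toReal ≤ 1 / (mt:ℝ) * (c - Real.log (2 * δ)) := by
        nlinarith [hlog]
      refine key.trans ?_
      have hc_div : 1 / (mt:ℝ) * c = D + ε2 := by
        rw [hc_def]; field_simp
      have hlog_div : 1 / (mt:ℝ) * (- Real.log (2 * δ)) ≤ ε2 := by
        have habs : -Real.log (2 * δ) ≤ |Real.log (2 * δ)| := neg_le_abs _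
        have h4 : |Real.log (2 * δ)| ≤ ε2 * mt := by
          rw [div_le_iff₀ hε2] at h3
          · linarith [h3]
        calc 1 / (mt:ℝ) * (- Real.log (2 * δ)) ≤ 1 / (mt:ℝ) * (ε2 * mt) := by
              apply mul_le_mul_of_nonneg_left _ hmt'.le
              exact habs.trans h4
          _ = ε2 := by field_simp
      calc 1 / (mt:ℝ) * (c - Real.log (2 * δ))
          = 1 / (mt:ℝ) * c + 1 / (mt:ℝ) * (- Real.log (2 * δ)) := by ring
        _ ≤ (D + ε2) + ε2 := by rw [hc_div]; linarith [hlog_div]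
        _ = D + ε := by rw [hε2_def]; ring
    calc Filter.liminf (fun t =>
        ((-(1 / (m t : ℝ)) : ℝ) : EReal) *
          elog (((Measure.pi fun _ : Fin (n t) => P).prod
            (Measure.pi fun _ : Fin (m t) => Q)) (A t))) atTop
        ≤ Filter.liminf (fun _ => ((D + ε : ℝ) : EReal)) atTop := liminf_le_liminf hfinal
      _ = ((D + ε : ℝ) : EReal) := liminf_const _
  by_contra hcon
  push_neg at hcon
  obtain ⟨z, hz1, hz2⟩ := EReal.exists_between_coe_real hcon
  have hzD : D < z := by exact_mod_cast hz1
  have := main (z - D) (by linarith)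
  rw [show ((D + (z - D) : ℝ) : EReal) = (z : EReal) by norm_num] at this
  exact absurd (lt_of_le_of_lt this hz2) (lt_irrefl _)
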